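/- Suppose that A,B,C,D are not coplanar. If (X₁,Y) and (X₂,Y) are two solutions of System (*) with the same second component Y, then X₁ = X₂; that is, every solution (X,Y) of System (*) is uniquely determined by its component Y. -/

import Mathlib

noncomputable section

/-- The Euclidean space ℝ³. -/
abbrev E3 := EuclideanSpace ℝ (Fin 3)

/-- `kc Xs Ys T` is the constant `k_T = 1/‖X*−T‖² + 1/‖Y*−T‖²`. -/
def kc (Xs Ys T : E3) : ℝ := 1 / ‖Xs - T‖ ^ 2 + 1 / ‖Ys - T‖ ^ 2

/-- `(X, Y)` is a solution of System (*). -/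
def IsSol (A B C D E F Xs Ys X Y : E3) : Prop :=
  ∀ T ∈ ({A, B, C, D, E, F} : Set E3),
    X ≠ T ∧ Y ≠ T ∧ 1 / ‖X - T‖ ^ 2 + 1 / ‖Y - T‖ ^ 2 = kc Xs Ys T

/-- Condition (i): no four of the six points `A,B,C,D,E,F` are coplanar. -/
def CondI (A B C D E F : E3) : Prop :=
  ∀ T₁ T₂ T₃ T₄ : E3,
    T₁ ∈ ({A, B, C, D, E, F} : Set E3) → T₂ ∈ ({A, B, C, D, E, F} : Set E3) →
    T₃ ∈ ({A, B, C, D, E, F} : Set E3) → T₄ ∈ ({A, B, C, D, E, F} : Set E3) →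
    T₁ ≠ T₂ → T₁ ≠ T₃ → T₁ ≠ T₄ → T₂ ≠ T₃ → T₂ ≠ T₄ → T₃ ≠ T₄ →
    ¬ Coplanar ℝ ({T₁, T₂, T₃, T₄} : Set E3)

/-- Condition (ii): no four of the six spheres of center `T` and radius `1/√k_T`
share a common point of ℝ³. -/
def CondII (A B C D E F Xs Ys : E3) : Prop :=
  ∀ T₁ T₂ T₃ T₄ : E3,
    T₁ ∈ ({A, B, C, D, E, F} : Set E3) → T₂ ∈ ({A, B, C, D, E, F} : Set E3) →
    T₃ ∈ ({A, B, C, D, E, F} : Set E3) → T₄ ∈ ({A, B, C, D, E, F} : Set E3) →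
    T₁ ≠ T₂ → T₁ ≠ T₃ → T₁ ≠ T₄ → T₂ ≠ T₃ → T₂ ≠ T₄ → T₃ ≠ T₄ →
    ¬ ∃ P : E3,
        ‖P - T₁‖ ^ 2 = 1 / kc Xs Ys T₁ ∧ ‖P - T₂‖ ^ 2 = 1 / kc Xs Ys T₂ ∧
        ‖P - T₃‖ ^ 2 = 1 / kc Xs Ys T₃ ∧ ‖P - T₄‖ ^ 2 = 1 / kc Xs Ys T₄

/-- `Γ_T(Y) = ‖Y−T‖²/(k_T‖Y−T‖² − 1) − ‖T‖²`. -/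
def Gamma (Xs Ys T Y : E3) : ℝ :=
  ‖Y - T‖ ^ 2 / (kc Xs Ys T * ‖Y - T‖ ^ 2 - 1) - ‖T‖ ^ 2

/-- If A,B,C,D are not coplanar, every solution (X,Y) of System (*) is uniquely
determined by its second component Y. -/
theorem solution_determined_by_Y (A B C D E F Xs Ys : E3)
    (hdist : List.Pairwise (· ≠ ·) [A, B, C, D, E, F, Xs, Ys])
    (hnc : ¬ Coplanar ℝ ({A, B, C, D} : Set E3))
    (X₁ X₂ Y : E3)
    (h₁ : IsSol A B C D E F Xs Ys X₁ Y) (h₂ : IsSol A B C D E F Xs Ys X₂ Y) :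
    X₁ = X₂ := by
  by_contra hne
  -- distances from each of A,B,C,D to X₁ and X₂ agree
  have key : ∀ T ∈ ({A, B, C, D, E, F} : Set E3), dist T X₁ = dist T X₂ := by
    intro T hT
    obtain ⟨hX1, hY1, e1⟩ := h₁ T hT
    obtain ⟨hX2, hY2, e2⟩ := h₂ T hT
    have hn1 : ‖X₁ - T‖ ≠ 0 := by simpa [sub_eq_zero] using hX1
    have hn2 : ‖X₂ - T‖ ≠ 0 := by simpa [sub_eq_zero] using hX2
    have : 1 / ‖X₁ - T‖ ^ 2 = 1 / ‖X₂ - T‖ ^ 2 := by linarith [e1, e2]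
    have hsq : ‖X₁ - T‖ ^ 2 = ‖X₂ - T‖ ^ 2 := by
      field_simp at this ⊢
      nlinarith [norm_nonneg (X₁ - T), norm_nonneg (X₂ - T), this]
    have hnorm : ‖X₁ - T‖ = ‖X₂ - T‖ := by
      nlinarith [norm_nonneg (X₁ - T), norm_nonneg (X₂ - T)]
    rw [dist_comm T X₁, dist_comm T X₂, dist_eq_norm, dist_eq_norm, hnorm]
  -- hence A,B,C,D lie on the perpendicular bisector of X₁ X₂
  have hsub : ({A, B, C, D} : Set E3) ⊆ (AffineSubspace.perpBisector X₁ X₂ : Set E3) := by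
    intro T hT
    rw [SetLike.mem_coe, AffineSubspace.mem_perpBisector_iff_dist_eq]
    apply key
    revert hT
    simp only [Set.mem_insert_iff, Set.mem_singleton_iff]
    tauto
  -- the perpendicular bisector has direction of finrank 2
  have hv : X₂ -ᵥ X₁ ≠ 0 := by
    simpa [sub_eq_zero] using (Ne.symm hne)
  have hdir : Module.finrank ℝ (AffineSubspace.perpBisector X₁ X₂).direction = 2 := by
    haveI : Fact (Module.finrank ℝ E3 = 2 + 1) := ⟨by simp⟩
    rw [AffineSubspace.direction_perpBisector]
    exact Submodule.finrank_orthogonal_span_singleton hv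
  have hle : vectorSpan ℝ ({A, B, C, D} : Set E3) ≤
      (AffineSubspace.perpBisector X₁ X₂).direction := by
    exact vectorSpan_mono ℝ hsub
  apply hnc
  unfold Coplanar
  calc Module.rank ℝ (vectorSpan ℝ ({A, B, C, D} : Set E3))
      ≤ Module.rank ℝ (AffineSubspace.perpBisector X₁ X₂).direction :=
        Submodule.rank_mono hle
    _ = 2 := by rw [← Module.finrank_eq_rank, hdir]; norm_num
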